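/- (Adjoint sensitivity analysis.) Let p ≥ 1, let f : ℝ × ℝ × ℝ^p → ℝ be continuously differentiable, fix θ₀ ∈ ℝ^p and y > 0, and suppose that for every θ in a neighborhood of θ₀ there is a unique solution Λ(·; θ) on [0, y] of the initial value problem ∂_t Λ(t; θ) = f(t, Λ(t; θ), θ), Λ(0; θ) = 0. Let κ : [0, y] → ℝ solve the backward linear problem κ'(t) = −κ(t)·∂_Λ f(t, Λ(t; θ₀), θ₀) with terminal condition κ(y) = 1, and let F₂ : [0, y] → ℝ^p solve F₂'(t) = −κ(t)·∂_θ f(t, Λ(t; θ₀), θ₀) with terminal condition F₂(y) = 0. Then the gradient of θ ↦ Λ(y; θ) at θ₀ equals F₂(0), i.e., ∂_θ Λ(y; θ₀) = F₂(0) = ∫₀^y κ(t)·∂_θ f(t, Λ(t; θ₀), θ₀) dt. -/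

import Mathlib

open Real Set

open scoped RealInnerProductSpace

set_option maxHeartbeats 1000000000

/-- Adjoint sensitivity analysis: the gradient of `θ ↦ Λ(y; θ)` at `θ₀` equals `F₂(0)`,
where `κ' = −κ · ∂_Λ f`, `κ(y) = 1`, and `F₂' = −κ · ∂_θ f`, `F₂(y) = 0`; moreover
`F₂(0) = ∫₀^y κ(t) · ∂_θ f(t, Λ(t;θ₀), θ₀) dt`. -/
theorem stmt_12
    (p : ℕ) (hp : 1 ≤ p)
    (f : ℝ → ℝ → EuclideanSpace ℝ (Fin p) → ℝ)
    (hf : ContDiff ℝ 1 (fun w : ℝ × ℝ × EuclideanSpace ℝ (Fin p) => f w.1 w.2.1 w.2.2))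
    -- partial derivative of f with respect to its second (scalar) argument
    (fΛ : ℝ → ℝ → EuclideanSpace ℝ (Fin p) → ℝ)
    (hfΛ : ∀ t L θ, HasDerivAt (fun L' => f t L' θ) (fΛ t L θ) L)
    -- gradient of f with respect to its third argument
    (fθ : ℝ → ℝ → EuclideanSpace ℝ (Fin p) → EuclideanSpace ℝ (Fin p))
    (hfθ : ∀ t L θ, HasGradientAt (fun θ' => f t L θ') (fθ t L θ) θ)
    (θ₀ : EuclideanSpace ℝ (Fin p)) (y : ℝ) (hy : 0 < y)
    -- Λ(·;θ) is the unique solution of the initial value problem on [0,y]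
    -- for every θ in a neighborhood of θ₀
    (Λ : EuclideanSpace ℝ (Fin p) → ℝ → ℝ)
    (U : Set (EuclideanSpace ℝ (Fin p))) (hU : U ∈ nhds θ₀)
    (hΛ0 : ∀ θ ∈ U, Λ θ 0 = 0)
    (hΛ : ∀ θ ∈ U, ∀ t ∈ Icc 0 y,
      HasDerivWithinAt (Λ θ) (f t (Λ θ t) θ) (Icc 0 y) t)
    (hΛuniq : ∀ θ ∈ U, ∀ Λ' : ℝ → ℝ, Λ' 0 = 0 →
      (∀ t ∈ Icc 0 y, HasDerivWithinAt Λ' (f t (Λ' t) θ) (Icc 0 y) t) →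
      ∀ t ∈ Icc 0 y, Λ' t = Λ θ t)
    -- κ solves the backward adjoint ODE with terminal condition κ(y) = 1
    (κ : ℝ → ℝ)
    (hκy : κ y = 1)
    (hκ : ∀ t ∈ Icc 0 y, HasDerivWithinAt κ
      (-(κ t) * fΛ t (Λ θ₀ t) θ₀) (Icc 0 y) t)
    -- F₂ solves the adjoint sensitivity ODE with terminal condition F₂(y) = 0
    (F₂ : ℝ → EuclideanSpace ℝ (Fin p))
    (hF₂y : F₂ y = 0)
    (hF₂ : ∀ t ∈ Icc 0 y, HasDerivWithinAt F₂
      (-(κ t) • fθ t (Λ θ₀ t) θ₀) (Icc 0 y) t) :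
    HasGradientAt (fun θ => Λ θ y) (F₂ 0) θ₀ ∧
      F₂ 0 = ∫ t in (0:ℝ)..y, κ t • fθ t (Λ θ₀ t) θ₀ := by
  classical
  have hθ₀U : θ₀ ∈ U := mem_of_mem_nhds hU
  obtain ⟨r₁, hr₁pos, hr₁U⟩ := Metric.mem_nhds_iff.1 hU
  -- The joint function and its Fréchet derivative
  set F : ℝ × ℝ × EuclideanSpace ℝ (Fin p) → ℝ := fun w => f w.1 w.2.1 w.2.2 with hFdef
  have hFdiff : Differentiable ℝ F := hf.differentiable one_ne_zero
  set D : ℝ × ℝ × EuclideanSpace ℝ (Fin p) →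
      (ℝ × ℝ × EuclideanSpace ℝ (Fin p)) →L[ℝ] ℝ := fun w => fderiv ℝ F w with hDdef
  have hDcont : Continuous D := hf.continuous_fderiv one_ne_zero
  -- directional derivative identities
  have hdirL : ∀ (t L : ℝ) (θ : EuclideanSpace ℝ (Fin p)),
      D (t, L, θ) (0, 1, 0) = fΛ t L θ := by
    intro t L θ
    have h1 : HasDerivAt (fun L' : ℝ => ((t, L', θ) : ℝ × ℝ × EuclideanSpace ℝ (Fin p)))
        ((0 : ℝ), (1 : ℝ), (0 : EuclideanSpace ℝ (Fin p))) L :=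
      (hasDerivAt_const L t).prodMk ((hasDerivAt_id L).prodMk (hasDerivAt_const L θ))
    have h2 := (hFdiff (t, L, θ)).hasFDerivAt.comp_hasDerivAt L h1
    exact h2.unique (hfΛ t L θ)
  set eθ : EuclideanSpace ℝ (Fin p) →L[ℝ] ℝ × ℝ × EuclideanSpace ℝ (Fin p) :=
    (0 : EuclideanSpace ℝ (Fin p) →L[ℝ] ℝ).prod
      ((0 : EuclideanSpace ℝ (Fin p) →L[ℝ] ℝ).prod
        (ContinuousLinearMap.id ℝ (EuclideanSpace ℝ (Fin p)))) with heθ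
  have heθ_apply : ∀ v : EuclideanSpace ℝ (Fin p), eθ v = (0, 0, v) := fun v => rfl
  have hdirθ : ∀ (t L : ℝ) (θ : EuclideanSpace ℝ (Fin p)),
      (InnerProductSpace.toDual ℝ (EuclideanSpace ℝ (Fin p))) (fθ t L θ)
        = (D (t, L, θ)).comp eθ := by
    intro t L θ
    have h1 : HasFDerivAt (fun θ' : EuclideanSpace ℝ (Fin p) =>
        ((t, L, θ') : ℝ × ℝ × EuclideanSpace ℝ (Fin p))) eθ θ :=
      (hasFDerivAt_const t θ).prodMk ((hasFDerivAt_const L θ).prodMk (hasFDerivAt_id θ))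
    have h2 := (hFdiff (t, L, θ)).hasFDerivAt.comp θ h1
    exact (hfθ t L θ).hasFDerivAt.unique h2
  have hdirθ_apply : ∀ (t L : ℝ) (θ v : EuclideanSpace ℝ (Fin p)),
      D (t, L, θ) (0, 0, v) = ⟪fθ t L θ, v⟫ := by
    intro t L θ v
    have h1 := congrArg (fun (φ : EuclideanSpace ℝ (Fin p) →L[ℝ] ℝ) => φ v) (hdirθ t L θ)
    simpa [InnerProductSpace.toDual_apply_apply, heθ_apply] using h1.symm
  have hdir : ∀ (t L : ℝ) (θ : EuclideanSpace ℝ (Fin p)) (l : ℝ)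
      (v : EuclideanSpace ℝ (Fin p)),
      D (t, L, θ) (0, l, v) = l * fΛ t L θ + ⟪fθ t L θ, v⟫ := by
    intro t L θ l v
    have hsplit : ((0 : ℝ), l, v)
        = l • ((0 : ℝ), (1 : ℝ), (0 : EuclideanSpace ℝ (Fin p))) + ((0 : ℝ), (0 : ℝ), v) := by
      simp [Prod.ext_iff]
    rw [hsplit, map_add, map_smul, hdirL, hdirθ_apply, smul_eq_mul]
  have hfθ_cont : Continuous fun w : ℝ × ℝ × EuclideanSpace ℝ (Fin p) =>
      fθ w.1 w.2.1 w.2.2 := by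
    have heq : (fun w : ℝ × ℝ × EuclideanSpace ℝ (Fin p) => fθ w.1 w.2.1 w.2.2)
        = fun w => (InnerProductSpace.toDual ℝ (EuclideanSpace ℝ (Fin p))).symm
            ((D w).comp eθ) := by
      funext w
      rw [← (InnerProductSpace.toDual ℝ (EuclideanSpace ℝ (Fin p))).symm_apply_apply
        (fθ w.1 w.2.1 w.2.2), hdirθ w.1 w.2.1 w.2.2]
    rw [heq]
    exact (InnerProductSpace.toDual ℝ (EuclideanSpace ℝ (Fin p))).symm.continuous.comp
      (hDcont.clm_comp continuous_const)
  -- bounds on the base solution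
  have hL₀c : ContinuousOn (Λ θ₀) (Icc 0 y) :=
    fun t ht => (hΛ θ₀ hθ₀U t ht).continuousWithinAt
  obtain ⟨M₀, hM₀⟩ := isCompact_Icc.exists_bound_of_continuousOn hL₀c
  set M : ℝ := max M₀ 0 with hMdef
  have hM0 : 0 ≤ M := le_max_right _ _
  have hL₀M : ∀ t ∈ Icc 0 y, |Λ θ₀ t| ≤ M := fun t ht =>
    le_trans (by simpa using hM₀ t ht) (le_max_left _ _)
  -- the compact convex set K
  set K : Set (ℝ × ℝ × EuclideanSpace ℝ (Fin p)) :=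
    Icc 0 y ×ˢ Icc (-(M + 1)) (M + 1) ×ˢ Metric.closedBall θ₀ 1 with hKdef
  have hKcomp : IsCompact K :=
    isCompact_Icc.prod (isCompact_Icc.prod (isCompact_closedBall _ _))
  have hKconv : Convex ℝ K :=
    (convex_Icc _ _).prod ((convex_Icc _ _).prod (convex_closedBall _ _))
  have hKmem : ∀ t ∈ Icc 0 y, ∀ L : ℝ, |L| ≤ M + 1 →
      ∀ θ ∈ Metric.closedBall θ₀ 1,
      ((t, L, θ) : ℝ × ℝ × EuclideanSpace ℝ (Fin p)) ∈ K := by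
    intro t ht L hL θ hθ
    exact ⟨ht, abs_le.1 hL, hθ⟩
  -- Lipschitz constant
  obtain ⟨C₁', hC₁'⟩ := hKcomp.exists_bound_of_continuousOn hDcont.continuousOn
  set C₁ : ℝ := max C₁' 1 with hC₁def
  have hC₁1 : (1 : ℝ) ≤ C₁ := le_max_right _ _
  have hC₁pos : (0 : ℝ) < C₁ := lt_of_lt_of_le one_pos hC₁1
  have hC₁ : ∀ w ∈ K, ‖D w‖ ≤ C₁ := fun w hw => le_trans (hC₁' w hw) (le_max_left _ _)
  have hLipF : LipschitzOnWith C₁.toNNReal F K :=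
    hKconv.lipschitzOnWith_of_nnnorm_hasFDerivWithin_le
      (fun w _ => (hFdiff w).hasFDerivAt.hasFDerivWithinAt)
      (fun w hw => by
        simp only [← NNReal.coe_le_coe, coe_nnnorm, Real.coe_toNNReal _ hC₁pos.le]
        exact hC₁ w hw)
  have hfdist : ∀ t ∈ Icc 0 y, ∀ (L L' : ℝ), |L| ≤ M + 1 → |L'| ≤ M + 1 →
      ∀ θ θ' : EuclideanSpace ℝ (Fin p), θ ∈ Metric.closedBall θ₀ 1 →
      θ' ∈ Metric.closedBall θ₀ 1 →
      |f t L θ - f t L' θ'| ≤ C₁ * (|L - L'| + ‖θ - θ'‖) := by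
    intro t ht L L' hL hL' θ θ' hθ hθ'
    have h1 := hLipF.dist_le_mul _ (hKmem t ht L hL θ hθ) _ (hKmem t ht L' hL' θ' hθ')
    rw [Real.coe_toNNReal _ hC₁pos.le] at h1
    have h2 : dist ((t, L, θ) : ℝ × ℝ × EuclideanSpace ℝ (Fin p)) (t, L', θ')
        ≤ |L - L'| + ‖θ - θ'‖ := by
      rw [Prod.dist_eq, Prod.dist_eq]
      have hn : (0:ℝ) ≤ |L - L'| + ‖θ - θ'‖ := by positivity
      refine max_le (by rw [dist_self]; exact hn) (max_le ?_ ?_)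
      · rw [Real.dist_eq]; exact le_add_of_nonneg_right (norm_nonneg _)
      · rw [dist_eq_norm]; exact le_add_of_nonneg_left (abs_nonneg _)
    calc |f t L θ - f t L' θ'|
        = dist (F ((t, L, θ) : ℝ × ℝ × EuclideanSpace ℝ (Fin p))) (F (t, L', θ')) := by
          rw [Real.dist_eq]
      _ ≤ C₁ * dist ((t, L, θ) : ℝ × ℝ × EuclideanSpace ℝ (Fin p)) (t, L', θ') := h1
      _ ≤ C₁ * (|L - L'| + ‖θ - θ'‖) := by
          exact mul_le_mul_of_nonneg_left h2 hC₁pos.le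
  -- the clamping functions
  set cl : ℝ → ℝ := fun L => max (-(M + 1)) (min (M + 1) L) with hcl
  have hcl_lip : LipschitzWith 1 cl := (LipschitzWith.id.const_min _).const_max _
  have hcl_abs : ∀ L : ℝ, |cl L| ≤ M + 1 := by
    intro L
    rw [abs_le]
    constructor
    · exact le_max_left _ _
    · exact max_le (by linarith) (min_le_left _ _)
  have hcl_eq : ∀ L : ℝ, |L| ≤ M + 1 → cl L = L := by
    intro L hL
    simp only [hcl]
    rw [min_eq_right (abs_le.1 hL).2, max_eq_right (abs_le.1 hL).1]
  set τ : ℝ → ℝ := fun t => max 0 (min y t) with hτdef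
  have hτ_mem : ∀ t, τ t ∈ Icc 0 y :=
    fun t => ⟨le_max_left _ _, max_le hy.le (min_le_left _ _)⟩
  have hτ_eq : ∀ t ∈ Icc 0 y, τ t = t := by
    intro t ht
    simp only [hτdef]
    rw [min_eq_right ht.2, max_eq_right ht.1]
  have hτcont : Continuous τ := continuous_const.max (continuous_const.min continuous_id)
  -- bound for F on K
  obtain ⟨C₀', hC₀'⟩ := hKcomp.exists_bound_of_continuousOn hf.continuous.continuousOn
  set C₀ : ℝ := max C₀' 0 with hC₀def
  have hC₀0 : 0 ≤ C₀ := le_max_right _ _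
  have hC₀ : ∀ w ∈ K, |F w| ≤ C₀ := fun w hw =>
    le_trans (by simpa using hC₀' w hw) (le_max_left _ _)
  -- Lipschitz in L of the clamped field, uniformly
  have hvLip : ∀ θ' ∈ Metric.closedBall θ₀ 1, ∀ t : ℝ, ∀ L L' : ℝ,
      dist (f (τ t) (cl L) θ') (f (τ t) (cl L') θ') ≤ C₁ * dist L L' := by
    intro θ' hθ' t L L'
    have h1 := hfdist (τ t) (hτ_mem t) (cl L) (cl L') (hcl_abs L) (hcl_abs L') θ' θ' hθ' hθ'
    have h2 : |cl L - cl L'| ≤ |L - L'| := by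
      have := hcl_lip.dist_le_mul L L'
      simpa [Real.dist_eq] using this
    rw [Real.dist_eq, Real.dist_eq]
    calc |f (τ t) (cl L) θ' - f (τ t) (cl L') θ'|
        ≤ C₁ * (|cl L - cl L'| + ‖θ' - θ'‖) := h1
      _ = C₁ * |cl L - cl L'| := by simp
      _ ≤ C₁ * |L - L'| := mul_le_mul_of_nonneg_left h2 hC₁pos.le
  -- the Gronwall constant
  set B : ℝ := Real.exp (C₁ * y) - 1 with hBdef
  have hB0 : 0 ≤ B := by
    have h1 : (1 : ℝ) ≤ Real.exp (C₁ * y) := Real.one_le_exp (by positivity)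
    simp only [hBdef]; linarith
  set r : ℝ := min r₁ (min 1 (1 / (B + 1))) with hrdef
  have hrpos : 0 < r := lt_min hr₁pos (lt_min one_pos (by positivity))
  have hr_r₁ : r ≤ r₁ := min_le_left _ _
  have hr_1 : r ≤ 1 := (min_le_right _ _).trans (min_le_left _ _)
  have hr_B : r ≤ 1 / (B + 1) := (min_le_right _ _).trans (min_le_right _ _)
  -- KEY: Lipschitz dependence of the solution on the parameter
  have key : ∀ θ : EuclideanSpace ℝ (Fin p), dist θ θ₀ < r →
      ∀ t ∈ Icc 0 y, |Λ θ t - Λ θ₀ t| ≤ B * dist θ θ₀ ∧ |Λ θ t| ≤ M + 1 := by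
    intro θ hθr
    have hθU : θ ∈ U := hr₁U (Metric.mem_ball.2 (lt_of_lt_of_le hθr hr_r₁))
    have hθ1 : θ ∈ Metric.closedBall θ₀ 1 := Metric.mem_closedBall.2 (hθr.le.trans hr_1)
    -- existence of the clamped solution
    have hPL : IsPicardLindelof (fun t L => f (τ t) (cl L) θ) (⟨0, left_mem_Icc.2 hy.le⟩ : Icc 0 y) 0
        (C₀ * y).toNNReal 0 C₀.toNNReal C₁.toNNReal := by
      refine ⟨?_, ?_, ?_, ?_⟩
      · intro t _
        apply LipschitzOnWith.of_dist_le_mul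
        intro L _ L' _
        have := hvLip θ hθ1 t L L'
        simpa [Real.coe_toNNReal _ hC₁pos.le] using this
      · intro x _
        have hc1 : Continuous fun t : ℝ =>
            ((τ t, cl x, θ) : ℝ × ℝ × EuclideanSpace ℝ (Fin p)) :=
          hτcont.prodMk continuous_const
        exact (hf.continuous.comp hc1).continuousOn
      · intro t _ x _
        rw [Real.norm_eq_abs, Real.coe_toNNReal _ hC₀0]
        exact hC₀ _ (hKmem (τ t) (hτ_mem t) (cl x) (hcl_abs x) θ hθ1)
      · rw [Real.coe_toNNReal _ hC₀0, Real.coe_toNNReal _ (mul_nonneg hC₀0 hy.le), NNReal.coe_zero, sub_zero]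
        show C₀ * max y (0 - 0) ≤ C₀ * y - 0
        rw [sub_zero, sub_zero, max_eq_left hy.le]
    obtain ⟨α, hα0', hαd⟩ := hPL.exists_eq_forall_mem_Icc_hasDerivWithinAt (Metric.mem_closedBall_self le_rfl)
    have hα0 : α 0 = 0 := hα0'
    have hαc : ContinuousOn α (Icc 0 y) := fun t ht => (hαd t ht).continuousWithinAt
    -- Gronwall comparison with the base solution
    have hα' : ∀ t ∈ Ico 0 y, HasDerivWithinAt α (f (τ t) (cl (α t)) θ) (Ici t) t := by
      intro t ht
      exact (hαd t (Ico_subset_Icc_self ht)).mono_of_mem_nhdsWithin (Icc_mem_nhdsGE_of_mem ht)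
    have hg' : ∀ t ∈ Ico 0 y, HasDerivWithinAt (Λ θ₀) (f t (Λ θ₀ t) θ₀) (Ici t) t := by
      intro t ht
      exact (hΛ θ₀ hθ₀U t (Ico_subset_Icc_self ht)).mono_of_mem_nhdsWithin (Icc_mem_nhdsGE_of_mem ht)
    have hv : ∀ t, LipschitzWith C₁.toNNReal (fun L => f (τ t) (cl L) θ₀) := by
      intro t
      rw [lipschitzWith_iff_dist_le_mul]
      intro L L'
      have := hvLip θ₀ (Metric.mem_closedBall_self one_pos.le) t L L'
      simpa [Real.coe_toNNReal _ hC₁pos.le] using this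
    have f_bound : ∀ t ∈ Ico 0 y,
        dist (f (τ t) (cl (α t)) θ) (f (τ t) (cl (α t)) θ₀) ≤ C₁ * dist θ θ₀ := by
      intro t _
      have h1 := hfdist (τ t) (hτ_mem t) (cl (α t)) (cl (α t)) (hcl_abs _) (hcl_abs _)
        θ θ₀ hθ1 (Metric.mem_closedBall_self one_pos.le)
      rw [Real.dist_eq, dist_eq_norm]
      simpa using h1
    have g_bound : ∀ t ∈ Ico 0 y,
        dist (f t (Λ θ₀ t) θ₀) (f (τ t) (cl (Λ θ₀ t)) θ₀) ≤ 0 := by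
      intro t ht
      rw [hτ_eq t (Ico_subset_Icc_self ht),
        hcl_eq _ ((hL₀M t (Ico_subset_Icc_self ht)).trans (by linarith))]
      simp
    have ha : dist (α 0) (Λ θ₀ 0) ≤ 0 := by
      rw [hα0, hΛ0 θ₀ hθ₀U]; simp
    have hgron := dist_le_of_approx_trajectories_ODE hv hαc hα' f_bound hL₀c hg' g_bound ha
    have hgb : ∀ t ∈ Icc 0 y, dist (α t) (Λ θ₀ t) ≤ B * dist θ θ₀ := by
      intro t ht
      refine (hgron t ht).trans ?_
      rw [Real.coe_toNNReal _ hC₁pos.le, add_zero, sub_zero,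
        gronwallBound_of_K_ne_0 hC₁pos.ne']
      simp only [zero_mul, zero_add]
      rw [mul_comm C₁ (dist θ θ₀), mul_div_assoc, div_self hC₁pos.ne', mul_one]
      have hexp : Real.exp (C₁ * t) ≤ Real.exp (C₁ * y) :=
        Real.exp_le_exp.2 (mul_le_mul_of_nonneg_left ht.2 hC₁pos.le)
      simp only [hBdef]
      calc dist θ θ₀ * (Real.exp (C₁ * t) - 1)
          ≤ dist θ θ₀ * (Real.exp (C₁ * y) - 1) :=
            mul_le_mul_of_nonneg_left (by linarith) dist_nonneg
        _ = (Real.exp (C₁ * y) - 1) * dist θ θ₀ := mul_comm _ _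
    have hBd1 : B * dist θ θ₀ ≤ 1 := by
      have h1 : dist θ θ₀ ≤ 1 / (B + 1) := hθr.le.trans hr_B
      have h2 : B * dist θ θ₀ ≤ B * (1 / (B + 1)) := mul_le_mul_of_nonneg_left h1 hB0
      have h3 : B * (1 / (B + 1)) ≤ 1 := by
        rw [mul_one_div, div_le_one (by positivity)]; linarith
      exact h2.trans h3
    have hαabs : ∀ t ∈ Icc 0 y, |α t| ≤ M + 1 := by
      intro t ht
      have h1 := hgb t ht
      rw [Real.dist_eq] at h1
      have h2 := hL₀M t ht
      have h3 : |α t| ≤ |α t - Λ θ₀ t| + |Λ θ₀ t| := by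
        calc |α t| = |(α t - Λ θ₀ t) + Λ θ₀ t| := by ring_nf
          _ ≤ |α t - Λ θ₀ t| + |Λ θ₀ t| := abs_add_le _ _
      linarith
    have hαODE : ∀ t ∈ Icc 0 y, HasDerivWithinAt α (f t (α t) θ) (Icc 0 y) t := by
      intro t ht
      have h1 := hαd t ht
      rwa [hτ_eq t ht, hcl_eq _ (hαabs t ht)] at h1
    have huniq := hΛuniq θ hθU α hα0 hαODE
    intro t ht
    rw [← huniq t ht]
    refine ⟨?_, hαabs t ht⟩
    have := hgb t ht
    rwa [Real.dist_eq] at this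
  -- continuity facts for κ and fθ along the base solution
  have hκcont : ContinuousOn κ (Icc 0 y) := fun t ht => (hκ t ht).continuousWithinAt
  obtain ⟨Bκ', hBκ'⟩ := isCompact_Icc.exists_bound_of_continuousOn hκcont
  set Bκ : ℝ := max Bκ' 1 with hBκdef
  have hBκ1 : (1 : ℝ) ≤ Bκ := le_max_right _ _
  have hBκpos : (0 : ℝ) < Bκ := lt_of_lt_of_le one_pos hBκ1
  have hκB : ∀ t ∈ Icc 0 y, |κ t| ≤ Bκ := fun t ht =>
    le_trans (by simpa using hBκ' t ht) (le_max_left _ _)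
  have hfθt : ContinuousOn (fun t => fθ t (Λ θ₀ t) θ₀) (Icc 0 y) := by
    have h1 : ContinuousOn (fun t : ℝ =>
        ((t, Λ θ₀ t, θ₀) : ℝ × ℝ × EuclideanSpace ℝ (Fin p))) (Icc 0 y) :=
      continuousOn_id.prodMk (hL₀c.prodMk continuousOn_const)
    exact hfθ_cont.comp_continuousOn h1
  constructor
  · -- the gradient statement
    rw [hasGradientAt_iff_hasFDerivAt, hasFDerivAt_iff_isLittleO_nhds_zero,
      Asymptotics.isLittleO_iff]
    intro c hc
    set c' : ℝ := c / (Bκ * (B + 1) * y) with hc'def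
    have hc'pos : 0 < c' := by positivity
    obtain ⟨η, hηpos, hη⟩ := Metric.uniformContinuousOn_iff.1
      (hKcomp.uniformContinuousOn_of_continuous hDcont.continuousOn) c' hc'pos
    set ε₀ : ℝ := min r (η / (B + 1)) with hε₀def
    have hε₀pos : 0 < ε₀ := lt_min hrpos (by positivity)
    rw [Metric.eventually_nhds_iff]
    refine ⟨ε₀, hε₀pos, ?_⟩
    intro h hh
    rw [dist_zero_right] at hh
    have hhr : ‖h‖ < r := lt_of_lt_of_le hh (min_le_left _ _)
    have hhη : ‖h‖ < η / (B + 1) := lt_of_lt_of_le hh (min_le_right _ _)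
    have hdistθ : dist (θ₀ + h) θ₀ = ‖h‖ := by simp [dist_eq_norm]
    have hθr : dist (θ₀ + h) θ₀ < r := by rwa [hdistθ]
    have hθU : θ₀ + h ∈ U := hr₁U (Metric.mem_ball.2 (lt_of_lt_of_le hθr hr_r₁))
    have hθ1 : θ₀ + h ∈ Metric.closedBall θ₀ 1 :=
      Metric.mem_closedBall.2 (hθr.le.trans hr_1)
    have keyθ := key (θ₀ + h) hθr
    -- the error term
    set Efun : ℝ → ℝ := fun t => f t (Λ (θ₀ + h) t) (θ₀ + h) - f t (Λ θ₀ t) θ₀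
      - ((Λ (θ₀ + h) t - Λ θ₀ t) * fΛ t (Λ θ₀ t) θ₀ + ⟪fθ t (Λ θ₀ t) θ₀, h⟫) with hEfun
    have hEbound : ∀ t ∈ Icc 0 y, |Efun t| ≤ c' * ((B + 1) * ‖h‖) := by
      intro t ht
      set w : ℝ × ℝ × EuclideanSpace ℝ (Fin p) := (t, Λ θ₀ t, θ₀) with hw
      set hv : ℝ × ℝ × EuclideanSpace ℝ (Fin p) := ((0 : ℝ), Λ (θ₀ + h) t - Λ θ₀ t, h)
        with hhv
      have hwK : w ∈ K :=
        hKmem t ht _ ((hL₀M t ht).trans (by linarith)) θ₀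
          (Metric.mem_closedBall_self one_pos.le)
      have hsum : w + hv = (t, Λ (θ₀ + h) t, θ₀ + h) := by
        simp only [hw, hhv, Prod.mk_add_mk]
        rw [add_zero, add_sub_cancel]
      have hw'K : w + hv ∈ K := by
        rw [hsum]
        exact hKmem t ht _ ((keyθ t ht).2) _ hθ1
      have hδB : |Λ (θ₀ + h) t - Λ θ₀ t| ≤ B * ‖h‖ := by
        have h1 := (keyθ t ht).1
        rwa [hdistθ] at h1
      have hnv : ‖hv‖ ≤ (B + 1) * ‖h‖ := by
        rw [hhv, Prod.norm_def, Prod.norm_def]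
        dsimp only
        have hB1 : (0:ℝ) ≤ (B + 1) * ‖h‖ := by positivity
        have hsplit : (B + 1) * ‖h‖ = B * ‖h‖ + ‖h‖ := by ring
        have hBh : 0 ≤ B * ‖h‖ := mul_nonneg hB0 (norm_nonneg h)
        refine max_le (by rw [norm_zero]; exact hB1) (max_le ?_ ?_)
        · rw [Real.norm_eq_abs]; linarith [hδB, norm_nonneg h]
        · linarith
      have hnvη : ‖hv‖ < η := by
        refine lt_of_le_of_lt hnv ?_
        have : (B + 1) * ‖h‖ < (B + 1) * (η / (B + 1)) :=
          mul_lt_mul_of_pos_left hhη (by positivity)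
        rwa [mul_div_cancel₀ _ (by positivity : (B:ℝ) + 1 ≠ 0)] at this
      have hMVT := ((hKconv.inter (convex_closedBall w ‖hv‖)).norm_image_sub_le_of_norm_hasFDerivWithin_le'
        (f := F) (f' := D) (φ := D w) (x := w) (y := w + hv)
        (fun x _ => (hFdiff x).hasFDerivAt.hasFDerivWithinAt)
        (fun x hx => by
          have hd : dist x w < η := lt_of_le_of_lt (Metric.mem_closedBall.1 hx.2) hnvη
          have := hη x hx.1 w hwK hd
          rw [dist_eq_norm] at this
          exact this.le)
        ⟨hwK, Metric.mem_closedBall_self (norm_nonneg _)⟩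
        ⟨hw'K, by rw [Metric.mem_closedBall, dist_eq_norm, add_sub_cancel_left]⟩)
      rw [add_sub_cancel_left] at hMVT
      have hDwhv : D w hv = (Λ (θ₀ + h) t - Λ θ₀ t) * fΛ t (Λ θ₀ t) θ₀
          + ⟪fθ t (Λ θ₀ t) θ₀, h⟫ := hdir t (Λ θ₀ t) θ₀ _ h
      have hFw' : F (w + hv) = f t (Λ (θ₀ + h) t) (θ₀ + h) := by rw [hsum]
      have hFw : F w = f t (Λ θ₀ t) θ₀ := rfl
      rw [hFw', hFw, hDwhv, Real.norm_eq_abs] at hMVT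
      refine hMVT.trans ?_
      exact mul_le_mul_of_nonneg_left hnv hc'pos.le
    -- the adjoint function g
    set g : ℝ → ℝ := fun t => κ t * (Λ (θ₀ + h) t - Λ θ₀ t) + (innerSL ℝ h) (F₂ t)
      with hgdef
    have hgd : ∀ t ∈ Icc 0 y, HasDerivWithinAt g (κ t * Efun t) (Icc 0 y) t := by
      intro t ht
      have h1 : HasDerivWithinAt (fun t => κ t * (Λ (θ₀ + h) t - Λ θ₀ t))
          ((-(κ t) * fΛ t (Λ θ₀ t) θ₀) * (Λ (θ₀ + h) t - Λ θ₀ t)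
            + κ t * (f t (Λ (θ₀ + h) t) (θ₀ + h) - f t (Λ θ₀ t) θ₀)) (Icc 0 y) t :=
        (hκ t ht).mul ((hΛ _ hθU t ht).sub (hΛ θ₀ hθ₀U t ht))
      have h2 : HasDerivWithinAt (fun t => (innerSL ℝ h) (F₂ t))
          ((innerSL ℝ h) (-(κ t) • fθ t (Λ θ₀ t) θ₀)) (Icc 0 y) t :=
        (innerSL ℝ h).hasFDerivAt.comp_hasDerivWithinAt t (hF₂ t ht)
      have h3 := h1.add h2
      refine h3.congr_deriv ?_
      simp only [hEfun, innerSL_apply_apply, inner_smul_right]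
      rw [real_inner_comm]
      ring
    have hbound : ∀ t ∈ Icc 0 y, ‖κ t * Efun t‖ ≤ Bκ * (c' * ((B + 1) * ‖h‖)) := by
      intro t ht
      rw [Real.norm_eq_abs, abs_mul]
      exact mul_le_mul (hκB t ht) (hEbound t ht) (abs_nonneg _) hBκpos.le
    have hMVT2 := (convex_Icc (0:ℝ) y).norm_image_sub_le_of_norm_hasDerivWithin_le
      hgd hbound (left_mem_Icc.2 hy.le) (right_mem_Icc.2 hy.le)
    have hgy : g y = Λ (θ₀ + h) y - Λ θ₀ y := by
      simp only [hgdef, hκy, hF₂y, one_mul, innerSL_apply_apply, inner_zero_right, add_zero]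
    have hg0 : g 0 = ⟪h, F₂ 0⟫ := by
      simp only [hgdef, hΛ0 _ hθU, hΛ0 θ₀ hθ₀U, sub_zero, mul_zero, innerSL_apply_apply,
        zero_add]
    rw [hgy, hg0] at hMVT2
    have htoDual : (InnerProductSpace.toDual ℝ (EuclideanSpace ℝ (Fin p))) (F₂ 0) h
        = ⟪h, F₂ 0⟫ := by
      rw [InnerProductSpace.toDual_apply_apply, real_inner_comm]
    rw [Real.norm_eq_abs]
    calc |Λ (θ₀ + h) y - Λ θ₀ y
          - (InnerProductSpace.toDual ℝ (EuclideanSpace ℝ (Fin p))) (F₂ 0) h|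
        = ‖Λ (θ₀ + h) y - Λ θ₀ y - ⟪h, F₂ 0⟫‖ := by rw [htoDual, Real.norm_eq_abs]
      _ ≤ Bκ * (c' * ((B + 1) * ‖h‖)) * ‖y - 0‖ := hMVT2
      _ = c * ‖h‖ := by
          rw [sub_zero, Real.norm_eq_abs, abs_of_pos hy, hc'def]
          field_simp
  · -- the integral identity
    have hcont : ContinuousOn F₂ (uIcc 0 y) := by
      rw [uIcc_of_le hy.le]
      exact fun t ht => (hF₂ t ht).continuousWithinAt
    have hderiv : ∀ x ∈ Ioo (min 0 y) (max 0 y),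
        HasDerivWithinAt F₂ (-(κ x) • fθ x (Λ θ₀ x) θ₀) (Ioi x) x := by
      rw [min_eq_left hy.le, max_eq_right hy.le]
      intro x hx
      exact ((hF₂ x (Ioo_subset_Icc_self hx)).hasDerivAt
        (Icc_mem_nhds hx.1 hx.2)).hasDerivWithinAt
    have hint : IntervalIntegrable (fun t => -(κ t) • fθ t (Λ θ₀ t) θ₀) MeasureTheory.volume 0 y := by
      apply ContinuousOn.intervalIntegrable
      rw [uIcc_of_le hy.le]
      exact (hκcont.neg).smul hfθt
    have hFTC := intervalIntegral.integral_eq_sub_of_hasDeriv_right hcont hderiv hint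
    rw [hF₂y, zero_sub] at hFTC
    have hneg : (fun t => -(κ t) • fθ t (Λ θ₀ t) θ₀)
        = fun t => -(κ t • fθ t (Λ θ₀ t) θ₀) := by
      funext t; rw [neg_smul]
    rw [hneg, intervalIntegral.integral_neg] at hFTC
    have := neg_injective hFTC
    exact this.symm
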